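/- For every n ≥ 2 and any two disjoint edges e₁, e₂ of Q_n, the hypercube Q_n can be decomposed into two (n−1)-dimensional subcubes (by fixing some coordinate j to 0 and 1 respectively) such that e₁ lies entirely in one subcube and e₂ lies entirely in the other. -/

import Mathlib

open SimpleGraph Finset

/-- The n-dimensional hypercube: vertices are 0/1 vectors, adjacent iff
Hamming distance is 1. -/
def cube (n : ℕ) : SimpleGraph (Fin n → ZMod 2) where
  Adj x y := hammingDist x y = 1
  symm := ⟨by intro x y h; try dsimp only at h ⊢
              rwa [hammingDist_comm]⟩
  loopless := ⟨by intro x h; simp [hammingDist_self] at h⟩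

/-- Parity of a vertex: sum of coordinates mod 2. -/
def parity {n : ℕ} (u : Fin n → ZMod 2) : ZMod 2 := ∑ i, u i

lemma two_ne : ∀ {x y : ZMod 2}, x ≠ y → y = x + 1 := by decide

lemma zeq1 : ∀ {x y z : ZMod 2}, x ≠ y → y ≠ z → x = z := by decide

lemma zeq2 : ∀ {x y z : ZMod 2}, x ≠ y → x ≠ z → y = z := by decide

lemma exists_flip {n : ℕ} {x y : Fin n → ZMod 2} (h : hammingDist x y = 1) :
    ∃ i, x i ≠ y i ∧ ∀ j, j ≠ i → x j = y j := by
  unfold hammingDist at h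
  obtain ⟨i, hi⟩ := Finset.card_eq_one.mp h
  refine ⟨i, ?_, ?_⟩
  · have : i ∈ Finset.univ.filter fun j => x j ≠ y j := by
      rw [hi]; exact Finset.mem_singleton_self i
    exact (Finset.mem_filter.mp this).2
  · intro j hj
    by_contra hne
    have : j ∈ Finset.univ.filter fun j => x j ≠ y j :=
      Finset.mem_filter.mpr ⟨Finset.mem_univ _, hne⟩
    rw [hi, Finset.mem_singleton] at this
    exact hj this

theorem stmt3 (n : ℕ) (hn : 2 ≤ n)
    (e₁ e₂ : Sym2 (Fin n → ZMod 2))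
    (he₁ : e₁ ∈ (cube n).edgeSet) (he₂ : e₂ ∈ (cube n).edgeSet)
    (hdisj : ∀ z, z ∈ e₁ → z ∉ e₂) :
    ∃ (j : Fin n) (c : ZMod 2),
      (∀ z ∈ e₁, z j = c) ∧ (∀ z ∈ e₂, z j = c + 1) := by
  induction e₁ using Sym2.ind with | _ a b =>
  induction e₂ using Sym2.ind with | _ c d =>
  rw [SimpleGraph.mem_edgeSet] at he₁ he₂
  obtain ⟨i₁, hab, hab'⟩ := exists_flip (he₁ : hammingDist a b = 1)
  obtain ⟨i₂, hcd, hcd'⟩ := exists_flip (he₂ : hammingDist c d = 1)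
  have hac : a ≠ c := fun h => hdisj a (by simp) (by simp [h])
  have had : a ≠ d := fun h => hdisj a (by simp) (by simp [h])
  have hbc : b ≠ c := fun h => hdisj b (by simp) (by simp [h])
  have hbd : b ≠ d := fun h => hdisj b (by simp) (by simp [h])
  by_cases H : ∃ j, j ≠ i₁ ∧ j ≠ i₂ ∧ a j ≠ c j
  · obtain ⟨j, hj1, hj2, hj⟩ := H
    refine ⟨j, a j, ?_, ?_⟩
    · intro z hz
      rcases Sym2.mem_iff.mp hz with rfl | rfl
      · rfl
      · exact (hab' j hj1).symm
    · intro z hz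
      rcases Sym2.mem_iff.mp hz with rfl | rfl
      · exact two_ne hj
      · rw [← hcd' j hj2]; exact two_ne hj
  · push_neg at H
    exfalso
    by_cases hii : i₁ = i₂
    · subst hii
      by_cases h1 : a i₁ = c i₁
      · apply hac
        funext j
        by_cases hj : j = i₁
        · subst hj; exact h1
        · exact H j hj hj
      · apply had
        funext j
        by_cases hj : j = i₁
        · subst hj; exact zeq1 h1 hcd
        · rw [H j hj hj, hcd' j hj]
    · by_cases h1 : a i₁ = c i₁ <;> by_cases h2 : a i₂ = c i₂
      · apply hac
        funext j
        by_cases hj1 : j = i₁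
        · subst hj1; exact h1
        · by_cases hj2 : j = i₂
          · subst hj2; exact h2
          · exact H j hj1 hj2
      · apply had
        funext j
        by_cases hj2 : j = i₂
        · subst hj2; exact zeq1 h2 hcd
        · rw [← hcd' j hj2]
          by_cases hj1 : j = i₁
          · subst hj1; exact h1
          · exact H j hj1 hj2
      · apply hbc
        funext j
        by_cases hj1 : j = i₁
        · subst hj1; exact zeq2 hab h1
        · rw [← hab' j hj1]
          by_cases hj2 : j = i₂
          · subst hj2; exact h2
          · exact H j hj1 hj2
      · apply hbd
        funext j
        by_cases hj1 : j = i₁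
        · subst hj1
          rw [← hcd' _ hii]
          exact zeq2 hab h1
        · rw [← hab' j hj1]
          by_cases hj2 : j = i₂
          · subst hj2; exact zeq1 h2 hcd
          · rw [H j hj1 hj2, hcd' j hj2]
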